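/- arXiv:2506.12393 — 2 statements merged into one kernel-verified Lean document; each statement's English description precedes it below -/
import Mathlib

section
/- Assume the diamond principle ♦ holds. Then there exists a family (B_α : α < ω₁) of pairwise disjoint stationary subsets of ω₁ whose union is all of ω₁; in particular, ω₁ can be partitioned into ω₁-many stationary sets. -/
noncomputable section

/-- The first uncountable ordinal `ω₁`. -/
def omega1 : Ordinal.{0} := (Cardinal.aleph 1).ord

/-- A club (closed unbounded) subset of `ω₁`. -/
def IsClubOmega1 (C : Set Ordinal) : Prop :=
  C ⊆ Set.Iio omega1 ∧
  (∀ β < omega1, ∃ γ ∈ C, β ≤ γ) ∧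
  (∀ α < omega1, Order.IsSuccLimit α → (∀ β < α, ∃ γ ∈ C, β ≤ γ ∧ γ < α) → α ∈ C)

/-- A stationary subset of `ω₁`: one meeting every club. -/
def IsStationaryIn (S : Set Ordinal) : Prop :=
  S ⊆ Set.Iio omega1 ∧ ∀ C : Set Ordinal, IsClubOmega1 C → (S ∩ C).Nonempty

/-- The diamond principle `♦`. -/
def DiamondPrinciple : Prop :=
  ∃ a : Ordinal → Set Ordinal,
    (∀ α, α < omega1 → a α ⊆ Set.Iio α) ∧
    ∀ A : Set Ordinal, A ⊆ Set.Iio omega1 →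
      IsStationaryIn {α | α < omega1 ∧ A ∩ Set.Iio α = a α}

open Classical in
/-- The level of a node of a tree: the order type of its set of strict
predecessors (defaulting to `0` when that set is not well-ordered). -/
noncomputable def levelOf {β : Type} [Preorder β] (x : β) : Ordinal :=
  if h : IsWellOrder {y : β // y < x} (· < ·) then
    @Ordinal.type {y : β // y < x} (· < ·) h
  else 0

/-- A tree order: the strict predecessors of every node are well-ordered. -/
def IsTreeOrder (β : Type) [Preorder β] : Prop :=
  ∀ x : β, IsWellOrder {y : β // y < x} (· < ·)

/-- The height of a tree: the supremum of the successors of the levels of its nodes. -/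
noncomputable def heightOf (β : Type) [Preorder β] : Ordinal :=
  ⨆ x : β, (levelOf x + 1)

/-- A Suslin tree: a tree of height `ω₁` all of whose chains and antichains
(in the tree sense: sets of pairwise incomparable nodes) are countable. -/
def IsSuslinTree (β : Type) [PartialOrder β] : Prop :=
  IsTreeOrder β ∧ heightOf β = omega1 ∧
  (∀ C : Set β, IsChain (· ≤ ·) C → C.Countable) ∧
  (∀ A : Set β, (A.Pairwise fun x y => ¬ x ≤ y ∧ ¬ y ≤ x) → A.Countable)

/-- Compatibility (forcing sense): a common lower bound exists. -/
def Compat {P : Type*} [Preorder P] (p q : P) : Prop := ∃ r, r ≤ p ∧ r ≤ q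

/-- The countable chain condition: every set of pairwise incompatible elements is countable. -/
def CCC (P : Type*) [Preorder P] : Prop :=
  ∀ A : Set P, (A.Pairwise fun p q => ¬ Compat p q) → A.Countable

/-- Compatibility in the upward sense: a common upper bound exists. -/
def UpCompat {P : Type*} [Preorder P] (p q : P) : Prop := ∃ r, p ≤ r ∧ q ≤ r

/-- The countable chain condition with compatibility read as the existence of
common upper bounds. -/
def CCCUp (P : Type*) [Preorder P] : Prop :=
  ∀ A : Set P, (A.Pairwise fun p q => ¬ UpCompat p q) → A.Countable

/-- The Knaster property. -/
def Knaster (P : Type*) [Preorder P] : Prop :=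
  ∀ A : Set P, ¬ A.Countable → ∃ B ⊆ A, ¬ B.Countable ∧ B.Pairwise Compat

/-- A bundled partial order. -/
structure PoCarrier : Type 1 where
  carrier : Type
  po : PartialOrder carrier

attribute [instance] PoCarrier.po

theorem omega1_isLimit' : Order.IsSuccLimit omega1 :=
  Cardinal.isSuccLimit_ord (Cardinal.aleph0_le_aleph 1)

theorem isClub_gt' {C : Set Ordinal} (hC : IsClubOmega1 C) {β : Ordinal} (hβ : β < omega1) :
    IsClubOmega1 {γ ∈ C | β < γ} := by
  obtain ⟨h1, h2, h3⟩ := hC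
  refine ⟨fun γ hγ => h1 hγ.1, ?_, ?_⟩
  · intro δ hδ
    have hm : max β δ + 1 < omega1 := by
      rw [Ordinal.add_one_eq_succ]
      exact omega1_isLimit'.succ_lt (max_lt hβ hδ)
    obtain ⟨γ, hγC, hγ⟩ := h2 _ hm
    exact ⟨γ, ⟨hγC, lt_of_le_of_lt (le_max_left β δ) (lt_of_lt_of_le (lt_add_one _) hγ)⟩,
      le_trans (le_trans (le_max_right β δ) (le_of_lt (lt_add_one _))) hγ⟩
  · intro α hα hlim H
    have hαC : α ∈ C := h3 α hα hlim (fun δ hδ => by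
      obtain ⟨γ, hγ, h⟩ := H δ hδ; exact ⟨γ, hγ.1, h⟩)
    obtain ⟨γ, hγ, _, hγα⟩ := H 0 hlim.pos
    exact ⟨hαC, lt_trans hγ.2 hγα⟩

theorem stationary_above' {S : Set Ordinal} (hS : IsStationaryIn S) {β : Ordinal}
    (hβ : β < omega1) : IsStationaryIn {α | α ∈ S ∧ β < α} := by
  refine ⟨fun α hα => hS.1 hα.1, fun C hC => ?_⟩
  obtain ⟨α, hαS, hαC, hβα⟩ := hS.2 _ (isClub_gt' hC hβ)
  exact ⟨α, ⟨hαS, hβα⟩, hαC⟩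

theorem stationary_mono' {S S' : Set Ordinal} (h : S ⊆ S') (h' : S' ⊆ Set.Iio omega1)
    (hS : IsStationaryIn S) : IsStationaryIn S' :=
  ⟨h', fun C hC => (hS.2 C hC).mono (Set.inter_subset_inter_left _ h)⟩

/-- Assume `♦`. Then `ω₁` can be partitioned into `ω₁`-many
stationary sets: there is a family `(B_α : α < ω₁)` of pairwise disjoint
stationary subsets of `ω₁` whose union is all of `ω₁`. -/
theorem stationary_partition_of_diamond (hD : DiamondPrinciple) :
    ∃ B : Set.Iio omega1 → Set Ordinal,
      (∀ i, IsStationaryIn (B i)) ∧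
      (∀ i j, i ≠ j → Disjoint (B i) (B j)) ∧
      (⋃ i, B i) = Set.Iio omega1 := by
  classical
  obtain ⟨a, _, ha2⟩ := hD
  set T : Ordinal → Set Ordinal :=
    fun β => {α | α ∈ {α | α < omega1 ∧ {β} ∩ Set.Iio α = a α} ∧ β < α} with hTdef
  have hTlt : ∀ β, T β ⊆ Set.Iio omega1 := fun β α hα => hα.1.1
  have hTstat : ∀ β, β < omega1 → IsStationaryIn (T β) := fun β hβ =>
    stationary_above' (ha2 {β} (Set.singleton_subset_iff.2 hβ)) hβ
  have hTdisj : ∀ β γ, β ≠ γ → Disjoint (T β) (T γ) := by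
    intro β γ hne
    rw [Set.disjoint_left]
    rintro α ⟨⟨hα1, hβeq⟩, hβα⟩ ⟨⟨_, hγeq⟩, hγα⟩
    apply hne
    have h1 : {β} ∩ Set.Iio α = ({β} : Set Ordinal) :=
      Set.inter_eq_left.2 (Set.singleton_subset_iff.2 hβα)
    have h2 : {γ} ∩ Set.Iio α = ({γ} : Set Ordinal) :=
      Set.inter_eq_left.2 (Set.singleton_subset_iff.2 hγα)
    have : ({β} : Set Ordinal) = {γ} := by rw [← h1, ← h2, hβeq, hγeq]
    exact Set.singleton_eq_singleton_iff.1 this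
  have h0 : (0 : Ordinal) < omega1 := omega1_isLimit'.pos
  set U : Set Ordinal := {α | ∃ γ, γ ≠ 0 ∧ γ < omega1 ∧ α ∈ T γ} with hUdef
  refine ⟨fun i => if i.1 = 0 then Set.Iio omega1 \ U else T i.1, ?_, ?_, ?_⟩
  · rintro ⟨β, hβ⟩
    by_cases hβ0 : β = 0
    · simp only [hβ0, if_pos]
      refine stationary_mono' ?_ Set.diff_subset (hTstat 0 h0)
      intro α hα
      refine ⟨hTlt 0 hα, ?_⟩
      rintro ⟨γ, hγ0, hγω, hαγ⟩
      exact Set.disjoint_left.1 (hTdisj 0 γ (Ne.symm hγ0)) hα hαγ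
    · simp only [if_neg hβ0]
      exact hTstat β hβ
  · rintro ⟨β, hβ⟩ ⟨γ, hγ⟩ hne
    have hne' : β ≠ γ := fun h => hne (Subtype.ext h)
    by_cases hβ0 : β = 0 <;> by_cases hγ0 : γ = 0
    · exact absurd (hβ0.trans hγ0.symm) hne'
    · simp only [hβ0, hγ0, if_pos, if_neg, if_true, if_false]
      rw [Set.disjoint_left]
      rintro α ⟨_, hαU⟩ hαT
      exact hαU ⟨γ, hγ0, hγ, hαT⟩
    · simp only [hβ0, hγ0, if_pos, if_neg, if_true, if_false]
      rw [Set.disjoint_right]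
      rintro α ⟨_, hαU⟩ hαT
      exact hαU ⟨β, hβ0, hβ, hαT⟩
    · simp only [if_neg hβ0, if_neg hγ0]
      exact hTdisj β γ hne'
  · apply Set.Subset.antisymm
    · intro α hα
      simp only [Set.mem_iUnion] at hα
      obtain ⟨⟨β, hβ⟩, hαB⟩ := hα
      by_cases hβ0 : β = 0
      · rw [if_pos hβ0] at hαB; exact hαB.1
      · rw [if_neg hβ0] at hαB; exact hTlt β hαB
    · intro α hα
      rw [Set.mem_iUnion]
      by_cases hαU : α ∈ U
      · obtain ⟨γ, hγ0, hγω, hαγ⟩ := hαU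
        exact ⟨⟨γ, hγω⟩, by simpa [if_neg hγ0] using hαγ⟩
      · exact ⟨⟨0, h0⟩, by simp only [if_pos]; exact ⟨hα, hαU⟩⟩

end
end

section
/- Let P be a partial order with the Knaster property and let Q be a partial order with the countable chain condition. Then the product P × Q, ordered coordinatewise, has the countable chain condition. -/
noncomputable section

/-- The coordinatewise product of a partial order with the
Knaster property and a partial order with the countable chain condition has
the countable chain condition. -/
theorem ccc_prod_of_knaster_of_ccc {P Q : Type*} [PartialOrder P] [PartialOrder Q]
    (hP : Knaster P) (hQ : CCC Q) : CCC (P × Q) := by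
  intro A hA
  by_contra hAc
  -- fibers over each p are antichains in Q
  have hfib : ∀ p : P, ({q | (p, q) ∈ A} : Set Q).Countable := by
    intro p
    apply hQ
    intro q1 h1 q2 h2 hne hcompat
    obtain ⟨r, hr1, hr2⟩ := hcompat
    have := hA h1 h2 (by simp [hne])
    exact this ⟨(p, r), ⟨le_refl p, hr1⟩, ⟨le_refl p, hr2⟩⟩
  -- the first projection image must be uncountable
  set B : Set P := Prod.fst '' A with hB
  have hBc : ¬ B.Countable := by
    intro hBc
    apply hAc
    have hsub : A ⊆ ⋃ p ∈ B, (fun q => (p, q)) '' {q | (p, q) ∈ A} := by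
      rintro ⟨p, q⟩ hpq
      exact Set.mem_biUnion ⟨(p, q), hpq, rfl⟩ ⟨q, hpq, rfl⟩
    exact Set.Countable.mono hsub
      (hBc.biUnion fun p _ => (hfib p).image _)
  obtain ⟨C, hCB, hCc, hCpair⟩ := hP B hBc
  -- choose a witness q for each p in C
  have hchoice : ∀ p ∈ C, ∃ q, (p, q) ∈ A := by
    intro p hp
    obtain ⟨⟨p', q⟩, hmem, hfst⟩ := hCB hp
    simp only at hfst
    exact ⟨q, hfst ▸ hmem⟩
  have hQne : Nonempty Q := by
    have hAn : A.Nonempty :=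
      Set.nonempty_iff_ne_empty.mpr fun h => hAc (h ▸ Set.countable_empty)
    exact ⟨hAn.choose.2⟩
  choose! f hf using hchoice
  -- key: for distinct p1 p2 in C, f p1 and f p2 are incompatible
  have hkey : ∀ p1 ∈ C, ∀ p2 ∈ C, p1 ≠ p2 → ¬ Compat (f p1) (f p2) := by
    intro p1 h1 p2 h2 hne ⟨r, hr1, hr2⟩
    obtain ⟨s, hs1, hs2⟩ := hCpair h1 h2 hne
    have hAne : (p1, f p1) ≠ (p2, f p2) := fun h => hne (congrArg Prod.fst h)
    exact hA (hf p1 h1) (hf p2 h2) hAne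
      ⟨(s, r), ⟨hs1, hr1⟩, ⟨hs2, hr2⟩⟩
  have hinj : Set.InjOn f C := by
    intro p1 h1 p2 h2 heq
    by_contra hne
    exact hkey p1 h1 p2 h2 hne ⟨f p1, le_refl _, heq ▸ le_refl _⟩
  have hDc : (f '' C).Countable := by
    apply hQ
    rintro q1 ⟨p1, h1, rfl⟩ q2 ⟨p2, h2, rfl⟩ hne
    exact hkey p1 h1 p2 h2 (fun h => hne (by rw [h]))
  exact hCc ((Set.countable_of_injective_of_countable_image hinj hDc))

end
end
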